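/- Let V ⊆ L(ℝⁿ, ℝᵐ) be a linear subspace. If δ(V) < ∞, then V contains no rank-one operator and there exist no P ∈ GL(m), Q ∈ GL(n) with P·W·Q ⊆ V, where W = span{diag(I₂,0), diag(J₂,0)} ⊆ L(ℝⁿ, ℝᵐ) (I₂ the 2×2 identity and J₂ the 2×2 rotation by π/2, padded by zeros). -/

import Mathlib

open Function

noncomputable section

variable {E F : Type*} [AddCommGroup E] [Module ℝ E] [AddCommGroup F] [Module ℝ F]

/-- `Mk k V` is the space of symmetric `k`-multilinear maps all of whose partial
contractions (fixing all slots but one) lie in `V`. -/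
def Mk (k : ℕ) (V : Submodule ℝ (E →ₗ[ℝ] F)) :
    Submodule ℝ (MultilinearMap ℝ (fun _ : Fin k => E) F) where
  carrier := {T | (∀ (σ : Equiv.Perm (Fin k)) (x : Fin k → E), T (x ∘ σ) = T x) ∧
    ∀ (x : Fin k → E) (i : Fin k), T.toLinearMap x i ∈ V}
  add_mem' := by
    rintro T S ⟨hT1, hT2⟩ ⟨hS1, hS2⟩
    refine ⟨fun σ x => by simp [hT1 σ x, hS1 σ x], fun x i => ?_⟩
    have h : (T + S).toLinearMap x i = T.toLinearMap x i + S.toLinearMap x i := by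
      ext z; simp
    rw [h]; exact V.add_mem (hT2 x i) (hS2 x i)
  zero_mem' := by
    refine ⟨fun σ x => rfl, fun x i => ?_⟩
    have h : (0 : MultilinearMap ℝ (fun _ : Fin k => E) F).toLinearMap x i = 0 := by
      ext z; simp
    rw [h]; exact V.zero_mem
  smul_mem' := by
    rintro c T ⟨hT1, hT2⟩
    refine ⟨fun σ x => by simp [hT1 σ x], fun x i => ?_⟩
    have h : (c • T).toLinearMap x i = c • T.toLinearMap x i := by
      ext z; simp
    rw [h]; exact V.smul_mem c (hT2 x i)

end

/-- Easy direction of the characterization theorem: if `δ(V) < ∞` then `V` contains no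
rank-one operator `ψ ⊗ w` and no conjugate `P·W·Q` of the complex-multiplication space
`W = span{diag(I₂,0), diag(J₂,0)}`. -/
theorem no_obstruction_of_delta_finite {n m : ℕ} (hn : 2 ≤ n) (hm : 2 ≤ m)
    (V : Submodule ℝ ((Fin n → ℝ) →ₗ[ℝ] (Fin m → ℝ)))
    (hδ : ∃ d : ℕ, ∀ k, d < k → Mk (E := Fin n → ℝ) (F := Fin m → ℝ) k V = ⊥)
    (W : Submodule ℝ ((Fin n → ℝ) →ₗ[ℝ] (Fin m → ℝ)))
    (hW : W = Submodule.span ℝ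
      {Matrix.toLin' (Matrix.of fun (i : Fin m) (j : Fin n) =>
          if (i : ℕ) = (j : ℕ) ∧ (i : ℕ) < 2 then (1 : ℝ) else 0),
       Matrix.toLin' (Matrix.of fun (i : Fin m) (j : Fin n) =>
          if (i : ℕ) = 0 ∧ (j : ℕ) = 1 then (-1 : ℝ)
          else if (i : ℕ) = 1 ∧ (j : ℕ) = 0 then 1 else 0)}) :
    (¬∃ (ψ : (Fin n → ℝ) →ₗ[ℝ] ℝ) (w : Fin m → ℝ),
        ψ ≠ 0 ∧ w ≠ 0 ∧ ψ.smulRight w ∈ V) ∧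
    ¬∃ (P : (Fin m → ℝ) ≃ₗ[ℝ] (Fin m → ℝ)) (Q : (Fin n → ℝ) ≃ₗ[ℝ] (Fin n → ℝ)),
        W.map (LinearEquiv.arrowCongr Q.symm P).toLinearMap ≤ V := by
  obtain ⟨d, hd⟩ := hδ
  set k := d + 1 with hk
  have hdk : d < k := Nat.lt_succ_self d
  have hbot := hd k hdk
  constructor
  · rintro ⟨ψ, w, hψ, hw, hmem⟩
    obtain ⟨v, hv⟩ : ∃ v, ψ v ≠ 0 := by
      by_contra h; push_neg at h; exact hψ (LinearMap.ext fun v => h v)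
    set T : MultilinearMap ℝ (fun _ : Fin k => (Fin n → ℝ)) (Fin m → ℝ) :=
      (LinearMap.toSpanSingleton ℝ _ w).compMultilinearMap
        ((MultilinearMap.mkPiAlgebra ℝ (Fin k) ℝ).compLinearMap fun _ => ψ) with hT
    have hTapp : ∀ x : Fin k → (Fin n → ℝ), T x = (∏ j, ψ (x j)) • w := by
      intro x
      simp [hT, LinearMap.toSpanSingleton_apply]
    have hTmem : T ∈ Mk k V := by
      constructor
      · intro σ x
        rw [hTapp, hTapp]
        congr 1
        exact Equiv.prod_comp σ fun j => ψ (x j)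
      · intro x i
        have heq : T.toLinearMap x i = (∏ j ∈ Finset.univ \ {i}, ψ (x j)) • ψ.smulRight w := by
          refine LinearMap.ext fun z => ?_
          rw [MultilinearMap.toLinearMap_apply, hTapp]
          have h1 : (∏ j, ψ (Function.update x i z j))
              = ψ z * ∏ j ∈ Finset.univ \ {i}, ψ (x j) := by
            rw [Finset.prod_congr rfl
              (fun j _ => Function.apply_update (fun _ y => ψ y) x i z j),
              Finset.prod_update_of_mem (Finset.mem_univ i)]
          rw [h1]
          simp only [LinearMap.smul_apply, LinearMap.smulRight_apply, mul_smul]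
          exact smul_comm _ _ _
        rw [heq]
        exact V.smul_mem _ hmem
    rw [hbot, Submodule.mem_bot] at hTmem
    have h0 : T (fun _ => v) = 0 := by rw [hTmem]; rfl
    rw [hTapp] at h0
    simp only [Finset.prod_const, Finset.card_univ, Fintype.card_fin] at h0
    exact smul_ne_zero (pow_ne_zero k hv) hw h0
  · rintro ⟨P, Q, hPQ⟩
    have h0n : 0 < n := by omega
    have h1n : 1 < n := by omega
    have h0m : 0 < m := by omega
    have h1m : 1 < m := by omega
    set i0n : Fin n := ⟨0, h0n⟩
    set i1n : Fin n := ⟨1, h1n⟩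
    set i0m : Fin m := ⟨0, h0m⟩
    set A : (Fin n → ℝ) →ₗ[ℝ] (Fin m → ℝ) := Matrix.toLin' (Matrix.of fun (i : Fin m) (j : Fin n) =>
          if (i : ℕ) = (j : ℕ) ∧ (i : ℕ) < 2 then (1 : ℝ) else 0) with hA
    set B : (Fin n → ℝ) →ₗ[ℝ] (Fin m → ℝ) := Matrix.toLin' (Matrix.of fun (i : Fin m) (j : Fin n) =>
          if (i : ℕ) = 0 ∧ (j : ℕ) = 1 then (-1 : ℝ)
          else if (i : ℕ) = 1 ∧ (j : ℕ) = 0 then 1 else 0) with hB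
    have hAapp : ∀ (v : Fin n → ℝ) (j : Fin m),
        A v j = if (j : ℕ) = 0 then v i0n else if (j : ℕ) = 1 then v i1n else 0 := by
      intro v j
      rw [hA, Matrix.toLin'_apply]
      show (∑ l : Fin n, (if (j : ℕ) = (l : ℕ) ∧ (j : ℕ) < 2 then (1:ℝ) else 0) * v l) = _
      by_cases h0 : (j : ℕ) = 0
      · rw [if_pos h0, Finset.sum_eq_single i0n]
        · simp [h0, i0n]
        · intro l _ hl
          have : (l : ℕ) ≠ 0 := fun h => hl (Fin.ext (by simp [h, i0n]))
          simp [h0, Ne.symm this]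
        · simp
      · rw [if_neg h0]
        by_cases h1 : (j : ℕ) = 1
        · rw [if_pos h1, Finset.sum_eq_single i1n]
          · simp [h1, i1n]
          · intro l _ hl
            have : (l : ℕ) ≠ 1 := fun h => hl (Fin.ext (by simp [h, i1n]))
            simp [h1, Ne.symm this]
          · simp
        · rw [if_neg h1]
          apply Finset.sum_eq_zero
          intro l _
          have : ¬((j : ℕ) = (l : ℕ) ∧ (j : ℕ) < 2) := by omega
          rw [if_neg this, zero_mul]
    have hBapp : ∀ (v : Fin n → ℝ) (j : Fin m),
        B v j = if (j : ℕ) = 0 then -(v i1n) else if (j : ℕ) = 1 then v i0n else 0 := by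
      intro v j
      rw [hB, Matrix.toLin'_apply]
      show (∑ l : Fin n, (if (j : ℕ) = 0 ∧ (l : ℕ) = 1 then (-1:ℝ)
          else if (j : ℕ) = 1 ∧ (l : ℕ) = 0 then 1 else 0) * v l) = _
      by_cases h0 : (j : ℕ) = 0
      · rw [if_pos h0, Finset.sum_eq_single i1n]
        · simp [h0, i1n]
        · intro l _ hl
          have : (l : ℕ) ≠ 1 := fun h => hl (Fin.ext (by simp [h, i1n]))
          simp [h0, this]
        · simp
      · rw [if_neg h0]
        by_cases h1 : (j : ℕ) = 1
        · rw [if_pos h1, Finset.sum_eq_single i0n]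
          · simp [h0, h1, i0n]
          · intro l _ hl
            have : (l : ℕ) ≠ 0 := fun h => hl (Fin.ext (by simp [h, i0n]))
            simp [h0, h1, this]
          · simp
        · rw [if_neg h1]
          apply Finset.sum_eq_zero
          intro l _
          simp [h0, h1]
    -- the real-linear maps φ and e
    set φ : (Fin n → ℝ) →ₗ[ℝ] ℂ :=
      { toFun := fun x => ⟨Q x i0n, Q x i1n⟩
        map_add' := by intro a b; simp [Complex.ext_iff]
        map_smul' := by intro c a; simp [Complex.ext_iff] } with hφ
    set e : ℂ →ₗ[ℝ] (Fin m → ℝ) :=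
      { toFun := fun z j => if (j : ℕ) = 0 then z.re else if (j : ℕ) = 1 then z.im else 0
        map_add' := by intro a b; funext j; split_ifs <;> simp_all
        map_smul' := by intro c a; funext j; split_ifs <;> simp_all } with he
    have key : ∀ (c : ℂ) (z : Fin n → ℝ),
        e (c * φ z) = c.re • A (Q z) + c.im • B (Q z) := by
      intro c z
      funext j
      have h1 : e (c * φ z) j = if (j : ℕ) = 0 then (c * φ z).re
          else if (j : ℕ) = 1 then (c * φ z).im else 0 := rfl
      simp only [Pi.add_apply, Pi.smul_apply, smul_eq_mul, h1, hAapp, hBapp]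
      have hre : (φ z).re = Q z i0n := rfl
      have him : (φ z).im = Q z i1n := rfl
      split_ifs <;> simp [Complex.mul_re, Complex.mul_im, hre, him] <;> ring
    set T : MultilinearMap ℝ (fun _ : Fin k => (Fin n → ℝ)) (Fin m → ℝ) :=
      (P.toLinearMap ∘ₗ e).compMultilinearMap
        ((MultilinearMap.mkPiAlgebra ℝ (Fin k) ℂ).compLinearMap fun _ => φ) with hT
    have hTapp : ∀ x : Fin k → (Fin n → ℝ), T x = P (e (∏ j, φ (x j))) := by
      intro x; simp [hT]
    have hTmem : T ∈ Mk k V := by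
      constructor
      · intro σ x
        rw [hTapp, hTapp]
        congr 2
        exact Equiv.prod_comp σ fun j => φ (x j)
      · intro x i
        set c : ℂ := ∏ j ∈ Finset.univ \ {i}, φ (x j) with hc
        have heq : T.toLinearMap x i =
            (LinearEquiv.arrowCongr Q.symm P).toLinearMap (c.re • A + c.im • B) := by
          refine LinearMap.ext fun z => ?_
          rw [MultilinearMap.toLinearMap_apply, hTapp]
          have h1 : (∏ j, φ (Function.update x i z j)) = c * φ z := by
            rw [Finset.prod_congr rfl
              (fun j _ => Function.apply_update (fun _ y => φ y) x i z j),
              Finset.prod_update_of_mem (Finset.mem_univ i), hc, mul_comm]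
          rw [h1, key]
          simp [LinearEquiv.arrowCongr]
        rw [heq]
        refine hPQ (Submodule.mem_map_of_mem ?_)
        rw [hW]
        exact Submodule.add_mem _
          (Submodule.smul_mem _ _ (Submodule.subset_span (Set.mem_insert _ _)))
          (Submodule.smul_mem _ _ (Submodule.subset_span
            (Set.mem_insert_of_mem _ rfl)))
    rw [hbot, Submodule.mem_bot] at hTmem
    set z₀ : Fin n → ℝ := Q.symm (fun j => if j = i0n then 1 else 0) with hz₀
    have hφz₀ : φ z₀ = 1 := by
      have : Q z₀ = (fun j => if j = i0n then 1 else 0) := Q.apply_symm_apply _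
      apply Complex.ext
      · show Q z₀ i0n = 1
        rw [this]; simp
      · show Q z₀ i1n = 0
        rw [this]
        have : i1n ≠ i0n := by simp [i0n, i1n, Fin.ext_iff]
        simp [this]
    have h0 : T (fun _ => z₀) = 0 := by rw [hTmem]; rfl
    rw [hTapp] at h0
    simp only [hφz₀, Finset.prod_const, one_pow] at h0
    have he1 : e (1:ℂ) = 0 := by
      apply P.injective
      rw [map_zero]
      exact h0
    have h2 : e (1:ℂ) i0m = (1:ℝ) := by simp [he, i0m]
    rw [he1] at h2
    simp at h2
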